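/- Let m ≥ 1 be an integer and let B be a subset of the cells of the m × m square grid such that no row of the grid is entirely contained in B and no column of the grid is entirely contained in B. Then |∂B| ≥ √|B|. -/
import Mathlib


/-- The cells of the `m × m` square grid: pairs `(i, j)` with `1 ≤ i, j ≤ m`. -/
def gridCells (m : ℕ) : Finset (ℕ × ℕ) := (Finset.Icc 1 m) ×ˢ (Finset.Icc 1 m)

/-- Two cells are adjacent if they agree in one coordinate and differ by exactly `1`
in the other (i.e. they share a side). -/
def adjacent (c c' : ℕ × ℕ) : Prop :=
  (c.1 = c'.1 ∧ (c.2 + 1 = c'.2 ∨ c'.2 + 1 = c.2)) ∨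
  (c.2 = c'.2 ∧ (c.1 + 1 = c'.1 ∨ c'.1 + 1 = c.1))

-- The boundary `∂B` of a set `B` of cells: all cells (of the grid) not in `B` that are
-- adjacent to some cell of `B`.
open Classical in
noncomputable def gridBoundary (m : ℕ) (B : Finset (ℕ × ℕ)) : Finset (ℕ × ℕ) :=
  (gridCells m).filter (fun c => c ∉ B ∧ ∃ c' ∈ B, adjacent c c')

open Classical

lemma step_up (P : ℕ → Prop) : ∀ d a, P a → ¬P (a+d) →
    ∃ k, a ≤ k ∧ k < a+d ∧ P k ∧ ¬P (k+1) := by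
  intro d
  induction d with
  | zero => intro a ha hb; exact absurd ha hb
  | succ d ih =>
    intro a ha hb
    by_cases h : P (a+d)
    · exact ⟨a+d, Nat.le_add_right _ _, by omega, h, by rwa [show a+d+1 = a+(d+1) by omega]⟩
    · obtain ⟨k, h1, h2, h3, h4⟩ := ih a ha h
      exact ⟨k, h1, by omega, h3, h4⟩

lemma step_down (P : ℕ → Prop) : ∀ d a, ¬P a → P (a+d) →
    ∃ k, a ≤ k ∧ k < a+d ∧ ¬P k ∧ P (k+1) := by
  intro d a ha hb
  obtain ⟨k, h1, h2, h3, h4⟩ := step_up (fun k => ¬P k) d a ha (not_not_intro hb)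
  exact ⟨k, h1, h2, h3, not_not.mp h4⟩

lemma mem_gridCells {m : ℕ} {c : ℕ × ℕ} :
    c ∈ gridCells m ↔ (1 ≤ c.1 ∧ c.1 ≤ m) ∧ (1 ≤ c.2 ∧ c.2 ≤ m) := by
  simp [gridCells, Finset.mem_product]

lemma row_boundary (m : ℕ) (B : Finset (ℕ × ℕ)) (hB : B ⊆ gridCells m)
    {i j j' : ℕ} (hj' : j' ∈ Finset.Icc 1 m) (hjB : (i, j) ∈ B) (hj'B : (i, j') ∉ B) :
    ∃ c ∈ gridBoundary m B, c.1 = i := by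
  have hij := mem_gridCells.mp (hB hjB)
  simp only [Finset.mem_Icc] at hj'
  set P : ℕ → Prop := fun k => (i, k) ∈ B with hP
  rcases lt_trichotomy j j' with h | h | h
  · obtain ⟨k, h1, h2, h3, h4⟩ := step_up P (j' - j) j hjB (by simpa [hP, show j + (j'-j) = j' by omega])
    refine ⟨(i, k+1), ?_, rfl⟩
    simp only [gridBoundary, Finset.mem_filter]
    refine ⟨mem_gridCells.mpr ⟨hij.1, by omega, by omega⟩, h4, ⟨(i,k), h3, Or.inl ⟨rfl, Or.inr rfl⟩⟩⟩
  · exact absurd (h ▸ hjB) hj'B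
  · obtain ⟨k, h1, h2, h3, h4⟩ := step_down P (j - j') j' hj'B (by simpa [hP, show j' + (j-j') = j by omega])
    refine ⟨(i, k), ?_, rfl⟩
    simp only [gridBoundary, Finset.mem_filter]
    refine ⟨mem_gridCells.mpr ⟨hij.1, by omega, by omega⟩, h3, ⟨(i,k+1), h4, Or.inl ⟨rfl, Or.inl rfl⟩⟩⟩

lemma col_boundary (m : ℕ) (B : Finset (ℕ × ℕ)) (hB : B ⊆ gridCells m)
    {i i' j : ℕ} (hi' : i' ∈ Finset.Icc 1 m) (hiB : (i, j) ∈ B) (hi'B : (i', j) ∉ B) :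
    ∃ c ∈ gridBoundary m B, c.2 = j := by
  have hij := mem_gridCells.mp (hB hiB)
  simp only [Finset.mem_Icc] at hi'
  set P : ℕ → Prop := fun k => (k, j) ∈ B with hP
  rcases lt_trichotomy i i' with h | h | h
  · obtain ⟨k, h1, h2, h3, h4⟩ := step_up P (i' - i) i hiB (by simpa [hP, show i + (i'-i) = i' by omega])
    refine ⟨(k+1, j), ?_, rfl⟩
    simp only [gridBoundary, Finset.mem_filter]
    refine ⟨mem_gridCells.mpr ⟨⟨by omega, by omega⟩, hij.2⟩, h4, ⟨(k,j), h3, Or.inr ⟨rfl, Or.inr rfl⟩⟩⟩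
  · exact absurd (h ▸ hiB) hi'B
  · obtain ⟨k, h1, h2, h3, h4⟩ := step_down P (i - i') i' hi'B (by simpa [hP, show i' + (i-i') = i by omega])
    refine ⟨(k, j), ?_, rfl⟩
    simp only [gridBoundary, Finset.mem_filter]
    refine ⟨mem_gridCells.mpr ⟨⟨by omega, by omega⟩, hij.2⟩, h3, ⟨(k+1,j), h4, Or.inr ⟨rfl, Or.inl rfl⟩⟩⟩

theorem boundary_card_of_no_black_row_no_black_col (m : ℕ) (hm : 1 ≤ m)
    (B : Finset (ℕ × ℕ)) (hB : B ⊆ gridCells m)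
    (hrow : ∀ i ∈ Finset.Icc 1 m, ∃ j ∈ Finset.Icc 1 m, (i, j) ∉ B)
    (hcol : ∀ j ∈ Finset.Icc 1 m, ∃ i ∈ Finset.Icc 1 m, (i, j) ∉ B) :
    ((gridBoundary m B).card : ℝ) ≥ Real.sqrt (B.card : ℝ) := by
  set b := gridBoundary m B with hb
  set R := B.image Prod.fst with hR
  set C := B.image Prod.snd with hC
  have hRb : R.card ≤ b.card := by
    have hsub : R ⊆ b.image Prod.fst := by
      intro i hi
      obtain ⟨p, hpB, hpi⟩ := Finset.mem_image.mp hi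
      have hp := mem_gridCells.mp (hB hpB)
      obtain ⟨j', hj', hj'B⟩ := hrow i (Finset.mem_Icc.mpr (hpi ▸ hp.1))
      obtain ⟨c, hcB, hci⟩ := row_boundary m B hB hj'
        (show (i, p.2) ∈ B by rwa [← hpi]) hj'B
      exact Finset.mem_image.mpr ⟨c, hcB, hci⟩
    exact (Finset.card_le_card hsub).trans Finset.card_image_le
  have hCb : C.card ≤ b.card := by
    have hsub : C ⊆ b.image Prod.snd := by
      intro j hj
      obtain ⟨p, hpB, hpj⟩ := Finset.mem_image.mp hj
      have hp := mem_gridCells.mp (hB hpB)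
      obtain ⟨i', hi', hi'B⟩ := hcol j (Finset.mem_Icc.mpr (hpj ▸ hp.2))
      obtain ⟨c, hcB, hcj⟩ := col_boundary m B hB hi'
        (show (p.1, j) ∈ B by rwa [← hpj]) hi'B
      exact Finset.mem_image.mpr ⟨c, hcB, hcj⟩
    exact (Finset.card_le_card hsub).trans Finset.card_image_le
  have hBRC : B.card ≤ R.card * C.card := by
    rw [← Finset.card_product]
    apply Finset.card_le_card
    intro p hp
    exact Finset.mem_product.mpr ⟨Finset.mem_image.mpr ⟨p, hp, rfl⟩,
      Finset.mem_image.mpr ⟨p, hp, rfl⟩⟩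
  have key : B.card ≤ b.card * b.card :=
    hBRC.trans (Nat.mul_le_mul hRb hCb)
  calc Real.sqrt (B.card : ℝ) ≤ Real.sqrt ((b.card : ℝ) * b.card) := by
        apply Real.sqrt_le_sqrt
        exact_mod_cast key
    _ = b.card := Real.sqrt_mul_self (by positivity)
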